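/- arXiv:1705.06138 — 4 statements merged into one kernel-verified Lean document; each statement's English description precedes it below -/
import Mathlib

section
/- Let K ⊂ ℂ be compact and suppose the family {Q^z : z ∈ K} is uniformly non-degenerated on K. Suppose further there are c ≥ 1 and M > 0 such that for every α ∈ 𝓗 ⊕ 𝓗 with ‖α‖ = 1, every z ∈ K and every n ≥ M, c^{-1} ≤ |S_n(α, z)| ≤ c. Then there is c' ≥ 1 such that for all z ∈ K, all n ≥ 1 and every generalised eigenvector u associated with z: c'^{-1}(‖u_0‖² + ‖u_1‖²) ≤ ‖a_{n+N-1}‖(‖u_{n-1}‖² + ‖u_n‖²) ≤ c'(‖u_0‖² + ‖u_1‖²). -/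
open ContinuousLinearMap Filter
open scoped ENNReal NNReal
noncomputable section

variable {H : Type*} [NormedAddCommGroup H] [InnerProductSpace ℂ H] [CompleteSpace H]

/-- The Hilbert space direct sum `𝓗 ⊕ 𝓗`. -/
abbrev H2 (H : Type*) [NormedAddCommGroup H] [InnerProductSpace ℂ H] : Type _ :=
  WithLp 2 (H × H)

/-- The column vector `(x, y)ᵗ` as an element of `𝓗 ⊕ 𝓗`. -/
def pr (x y : H) : H2 H := (WithLp.equiv 2 (H × H)).symm (x, y)

/-- The block operator `[[A, B], [C, D]]` on `𝓗 ⊕ 𝓗`. -/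
def blk (A B C D : H →L[ℂ] H) : H2 H →L[ℂ] H2 H :=
  ((WithLp.prodContinuousLinearEquiv 2 ℂ H H).symm : (H × H) →L[ℂ] H2 H) ∘L
    ((A ∘L ContinuousLinearMap.fst ℂ H H + B ∘L ContinuousLinearMap.snd ℂ H H).prod
      (C ∘L ContinuousLinearMap.fst ℂ H H + D ∘L ContinuousLinearMap.snd ℂ H H)) ∘L
    ((WithLp.prodContinuousLinearEquiv 2 ℂ H H) : H2 H →L[ℂ] (H × H))

/-- The real part `sym X = (X + X^*)/2` of a bounded operator. -/
def sym {E : Type*} [NormedAddCommGroup E] [InnerProductSpace ℂ E] [CompleteSpace E]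
    (X : E →L[ℂ] E) : E →L[ℂ] E :=
  (2 : ℂ)⁻¹ • (X + ContinuousLinearMap.adjoint X)

/-- `X` is strictly positive: `⟨Xv, v⟩ ≥ c‖v‖²` for some `c > 0`. -/
def StrictlyPos {E : Type*} [NormedAddCommGroup E] [InnerProductSpace ℂ E] [CompleteSpace E]
    (X : E →L[ℂ] E) : Prop :=
  ∃ c > (0 : ℝ), ∀ v : E, c * ‖v‖ ^ 2 ≤ (inner ℂ (X v) v : ℂ).re

/-- `X'` is a two-sided bounded inverse of `X`. -/
def Inverts (X X' : H →L[ℂ] H) : Prop := X' ∘L X = 1 ∧ X ∘L X' = 1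

/-- The formal Jacobi matrix `𝒜`: `(𝒜u)₀ = b₀u₀ + a₀u₁`,
`(𝒜u)ₙ = aₙ₋₁^* uₙ₋₁ + bₙ uₙ + aₙ uₙ₊₁` for `n ≥ 1`. -/
def jacobiA (a b : ℕ → H →L[ℂ] H) (u : ℕ → H) : ℕ → H
  | 0 => b 0 (u 0) + a 0 (u 1)
  | n + 1 => adjoint (a n) (u n) + b (n + 1) (u (n + 1)) + a (n + 1) (u (n + 2))

/-- The generalised eigenvector recurrence
`aₙ₋₁^* uₙ₋₁ + bₙ uₙ + aₙ uₙ₊₁ = z uₙ` for all `n ≥ 1`. -/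
def GenEigRec (a b : ℕ → H →L[ℂ] H) (z : ℂ) (u : ℕ → H) : Prop :=
  ∀ n : ℕ, adjoint (a n) (u n) + b (n + 1) (u (n + 1)) + a (n + 1) (u (n + 2)) = z • u (n + 1)

/-- `u` is a generalised eigenvector associated with `z`. -/
def IsGenEig (a b : ℕ → H →L[ℂ] H) (z : ℂ) (u : ℕ → H) : Prop :=
  u ≠ 0 ∧ GenEigRec a b z u

/-- `u` belongs to `ℓ²(ℕ; 𝓗)`. -/
def MemL2 (u : ℕ → H) : Prop := Summable fun n => ‖u n‖ ^ 2

/-- The transfer matrix `Bₙ(z)`; here `a'` is the sequence of inverses `aₙ⁻¹`. -/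
def transfer (a a' b : ℕ → H →L[ℂ] H) (z : ℂ) (n : ℕ) : H2 H →L[ℂ] H2 H :=
  blk 0 1 (-(a' n ∘L adjoint (a (n - 1)))) (a' n ∘L (z • (1 : H →L[ℂ] H) - b n))

/-- `prodD B n k = B (n+k-1) ∘ ⋯ ∘ B n`. -/
def prodD (B : ℕ → (H2 H →L[ℂ] H2 H)) : ℕ → ℕ → (H2 H →L[ℂ] H2 H)
  | _, 0 => 1
  | n, k + 1 => B (n + k) ∘L prodD B n k

/-- `sym (diag(a_{n+N-1}, a_{n+N-1}^*) · E · Xₙ(z))` where `Xₙ(z) = B_{n+N-1}(z)⋯Bₙ(z)`. -/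
def turanOp (a a' b : ℕ → H →L[ℂ] H) (N : ℕ) (z : ℂ) (n : ℕ) : H2 H →L[ℂ] H2 H :=
  sym (blk (a (n + N - 1)) 0 0 (adjoint (a (n + N - 1))) ∘L blk 0 (-1) 1 0 ∘L
    prodD (transfer a a' b z) n N)

/-- The `N`-shifted Turán determinant `Sₙ(α, z)` of a generalised eigenvector `u`. -/
def turanS (a a' b : ℕ → H →L[ℂ] H) (N : ℕ) (z : ℂ) (u : ℕ → H) (n : ℕ) : ℝ :=
  (inner ℂ (turanOp a a' b N z n (pr (u (n - 1)) (u n))) (pr (u (n - 1)) (u n)) : ℂ).re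

/-- The family `{Q^z : z ∈ K}` is uniformly non-degenerated on `K`, where
`Qₙ^z(v) = ‖a_{n+N-1}‖⁻¹ ⟨sym(diag(a_{n+N-1}, a_{n+N-1}^*)·E·Xₙ(z)) v, v⟩`. -/
def UnifNonDeg (a a' b : ℕ → H →L[ℂ] H) (N : ℕ) (K : Set ℂ) : Prop :=
  ∃ c ≥ (1 : ℝ), ∃ M : ℕ, 1 ≤ M ∧ ∀ v : H2 H, ∀ z ∈ K, ∀ n : ℕ, M ≤ n →
    c⁻¹ * ‖v‖ ^ 2 ≤ |‖a (n + N - 1)‖⁻¹ * (inner ℂ (turanOp a a' b N z n v) v : ℂ).re| ∧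
    |‖a (n + N - 1)‖⁻¹ * (inner ℂ (turanOp a a' b N z n v) v : ℂ).re| ≤ c * ‖v‖ ^ 2

/-- The matrix `𝓑ᵢ(z) = [[0, Id], [−Rᵢ, z Tᵢ − Qᵢ]]`. -/
def calB (T Q R : ℕ → H →L[ℂ] H) (z : ℂ) (i : ℕ) : H2 H →L[ℂ] H2 H :=
  blk 0 1 (-(R i)) (z • T i - Q i)

/-- `ℱ(λ) = sym([[0, −C_{N-1}], [C_{N-1}^*, 0]] · 𝓑_{N-1}(λ)⋯𝓑₀(λ))` from Theorem B. -/
def calF (T Q R C : ℕ → H →L[ℂ] H) (N : ℕ) (lam : ℝ) : H2 H →L[ℂ] H2 H :=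
  sym (blk 0 (-(C (N - 1))) (adjoint (C (N - 1))) 0 ∘L prodD (calB T Q R (lam : ℂ)) 0 N)

/-- The quadratic-form operator of the commutator approach (`al` is the sequence `α`):
`sym [[α_{n-1} a_{n-1}^*, −α_{n-1}(λ − bₙ)], [0, αₙ aₙ^*]]`. -/
def commOp (a b al : ℕ → H →L[ℂ] H) (lam : ℝ) (n : ℕ) : H2 H →L[ℂ] H2 H :=
  sym (blk (al (n - 1) ∘L adjoint (a (n - 1)))
    (-(al (n - 1) ∘L ((lam : ℂ) • (1 : H →L[ℂ] H) - b n))) 0 (al n ∘L adjoint (a n)))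

/-- `Sₙ(α, λ)` of the commutator approach. -/
def commS (a b al : ℕ → H →L[ℂ] H) (lam : ℝ) (u : ℕ → H) (n : ℕ) : ℝ :=
  (inner ℂ (commOp a b al lam n (pr (u (n - 1)) (u n))) (pr (u (n - 1)) (u n)) : ℂ).re

/-- `sym [[αₙ aₙ^*, −(λ − bₙ) aₙ₋₁⁻¹ αₙ₋₁ aₙ], [0, aₙ^* aₙ₋₁⁻¹ αₙ₋₁ aₙ]]`;
its normalisation converges to `C(λ)`. -/
def climOp (a a' b al : ℕ → H →L[ℂ] H) (lam : ℝ) (n : ℕ) : H2 H →L[ℂ] H2 H :=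
  sym (blk (al n ∘L adjoint (a n))
    (-((((lam : ℂ) • (1 : H →L[ℂ] H) - b n)) ∘L a' (n - 1) ∘L al (n - 1) ∘L a n))
    0
    (adjoint (a n) ∘L a' (n - 1) ∘L al (n - 1) ∘L a n))

/-- Consecutive pairs `(uₙ, uₙ₊₁)` of the generalised eigenvector with initial data `α`. -/
def genPair (a a' b : ℕ → H →L[ℂ] H) (z : ℂ) (α : H2 H) : ℕ → H × H
  | 0 => (WithLp.equiv 2 (H × H)) α
  | n + 1 =>
      let p := genPair a a' b z α n
      (p.2, a' (n + 1) (z • p.2 - b (n + 1) p.2 - adjoint (a n) p.1))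

/-- The generalised eigenvector with initial data `(u₀, u₁)ᵗ = α`. -/
def genVec (a a' b : ℕ → H →L[ℂ] H) (z : ℂ) (α : H2 H) (n : ℕ) : H :=
  (genPair a a' b z α n).1

/-- Iterated logarithm `log^{(i)}`. -/
def iterLog : ℕ → ℝ → ℝ
  | 0, x => x
  | i + 1, x => Real.log (iterLog i x)

/-- `g_j(x) = ∏_{i=1}^j log^{(i)}(x)`. -/
def gfun (j : ℕ) (x : ℝ) : ℝ := ∏ i ∈ Finset.Icc 1 j, iterLog i x

section AuxLemmas

omit [CompleteSpace H] in
lemma pr_norm_sq (x y : H) : ‖pr x y‖ ^ 2 = ‖x‖ ^ 2 + ‖y‖ ^ 2 := by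
  rw [WithLp.prod_norm_sq_eq_of_L2]; rfl

omit [CompleteSpace H] in
lemma pr_smul (c : ℂ) (x y : H) : pr (c • x) (c • y) = c • pr x y := by
  rw [pr, pr]; rfl

omit [CompleteSpace H] in
lemma pr_eq_zero {x y : H} (h : pr x y = 0) : x = 0 ∧ y = 0 := by
  have h1 := congrArg (fun v => (WithLp.equiv 2 (H × H)) v) h
  simp [pr] at h1; exact h1

lemma inverts_apply {X X' : H →L[ℂ] H} (h : Inverts X X') (v : H) : X' (X v) = v := by
  have h2 := congrArg (fun T : H →L[ℂ] H => T v) h.1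
  simpa using h2

lemma inverts_adjoint_apply {X X' : H →L[ℂ] H} (h : Inverts X X') (v : H) :
    adjoint X' (adjoint X v) = v := by
  have h2 : adjoint X' ∘L adjoint X = 1 := by
    rw [← adjoint_comp, h.2]
    simpa [ContinuousLinearMap.one_def] using
      (adjoint_id (𝕜 := ℂ) (E := H))
  have h3 := congrArg (fun T : H →L[ℂ] H => T v) h2
  simpa using h3

lemma norm_adjoint_eq (X : H →L[ℂ] H) : ‖adjoint X‖ = ‖X‖ :=
  LinearIsometryEquiv.norm_map (ContinuousLinearMap.adjoint) X

lemma genEig_zero (a b a' : ℕ → H →L[ℂ] H) (hinv : ∀ n, Inverts (a n) (a' n))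
    {z : ℂ} {u : ℕ → H} (hu : GenEigRec a b z u) (h0 : u 0 = 0) (h1 : u 1 = 0) :
    u = 0 := by
  have key : ∀ n, u n = 0 ∧ u (n + 1) = 0 := by
    intro n
    induction n with
    | zero => exact ⟨h0, h1⟩
    | succ k ih =>
      refine ⟨ih.2, ?_⟩
      have h := hu k
      rw [ih.1, ih.2] at h
      simp only [map_zero, zero_add, smul_zero] at h
      have h2 : u (k + 1 + 1) = a' (k + 1) (a (k + 1) (u (k + 2))) :=
        (inverts_apply (hinv (k + 1)) _).symm
      rw [h2, h, map_zero]
  funext n; exact (key n).1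

lemma turanS_smul (a a' b : ℕ → H →L[ℂ] H) (N : ℕ) (z : ℂ) (u : ℕ → H) (t : ℝ) (n : ℕ) :
    turanS a a' b N z (fun m => ((t : ℂ)) • u m) n = (t * t) * turanS a a' b N z u n := by
  unfold turanS
  rw [pr_smul, map_smul, inner_smul_left, inner_smul_right, Complex.conj_ofReal]
  simp [Complex.mul_re]
  ring

lemma myprod_one_le (d : ℕ → ℝ) (s : Finset ℕ) (hd : ∀ i ∈ s, 1 ≤ d i) :
    (1:ℝ) ≤ ∏ k ∈ s, d k := by
  calc (1:ℝ) = ∏ _k ∈ s, (1:ℝ) := by simp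
    _ ≤ ∏ k ∈ s, d k := Finset.prod_le_prod (fun i _ => zero_le_one) hd

lemma myprod_single_le (d : ℕ → ℝ) (s : Finset ℕ) (hd : ∀ i ∈ s, 1 ≤ d i)
    {k : ℕ} (hk : k ∈ s) : d k ≤ ∏ i ∈ s, d i := by
  rw [← Finset.mul_prod_erase _ _ hk]
  exact le_mul_of_one_le_right (le_trans zero_le_one (hd k hk))
    (myprod_one_le d _ (fun i hi => hd i (Finset.mem_of_mem_erase hi)))

end AuxLemmas
set_option maxHeartbeats 1000000 in
/-- Theorem `thm:1`. -/
theorem statement5 (a b a' : ℕ → H →L[ℂ] H)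
    (hinv : ∀ n, Inverts (a n) (a' n)) (hb : ∀ n, IsSelfAdjoint (b n))
    (N : ℕ) (hN : 0 < N) (K : Set ℂ) (hK : IsCompact K)
    (hnd : UnifNonDeg a a' b N K)
    (hS : ∃ c ≥ (1 : ℝ), ∃ M : ℕ, 0 < M ∧
      ∀ z ∈ K, ∀ u : ℕ → H, GenEigRec a b z u → ‖pr (u 0) (u 1)‖ = 1 →
        ∀ n : ℕ, M ≤ n →
          c⁻¹ ≤ |turanS a a' b N z u n| ∧ |turanS a a' b N z u n| ≤ c) :
    ∃ c' ≥ (1 : ℝ), ∀ z ∈ K, ∀ u : ℕ → H, IsGenEig a b z u → ∀ n : ℕ, 1 ≤ n →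
      c'⁻¹ * (‖u 0‖ ^ 2 + ‖u 1‖ ^ 2) ≤ ‖a (n + N - 1)‖ * (‖u (n - 1)‖ ^ 2 + ‖u n‖ ^ 2) ∧
      ‖a (n + N - 1)‖ * (‖u (n - 1)‖ ^ 2 + ‖u n‖ ^ 2) ≤ c' * (‖u 0‖ ^ 2 + ‖u 1‖ ^ 2) := by
  rcases subsingleton_or_nontrivial H with hH | hH
  · exact ⟨1, le_refl 1, fun z hz u hu => absurd (Subsingleton.elim u 0) hu.1⟩
  obtain ⟨c₁, hc₁, M₁, hM₁, hnd'⟩ := hnd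
  obtain ⟨c₂, hc₂, M₂, hM₂, hS'⟩ := hS
  have hc₁0 : (0:ℝ) < c₁ := lt_of_lt_of_le one_pos hc₁
  have hc₂0 : (0:ℝ) < c₂ := lt_of_lt_of_le one_pos hc₂
  -- bound on K
  obtain ⟨R₀, hR₀⟩ := (Metric.isBounded_iff_subset_closedBall 0).mp hK.isBounded
  set R : ℝ := max R₀ 0 with hRdef
  have hR0 : (0:ℝ) ≤ R := le_max_right _ _
  have hKR : ∀ z ∈ K, ‖z‖ ≤ R := by
    intro z hz
    have := hR₀ hz
    rw [Metric.mem_closedBall, dist_zero_right] at this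
    exact le_trans this (le_max_left _ _)
  -- positivity of norms of a
  have hprodinv : ∀ m, (1:ℝ) ≤ ‖a' m‖ * ‖a m‖ := by
    intro m
    calc (1:ℝ) = ‖(ContinuousLinearMap.id ℂ H)‖ := (ContinuousLinearMap.norm_id).symm
      _ = ‖a' m ∘L a m‖ := by rw [(hinv m).1]; rfl
      _ ≤ ‖a' m‖ * ‖a m‖ := ContinuousLinearMap.opNorm_comp_le _ _
  have ha_pos : ∀ m, (0:ℝ) < ‖a m‖ := by
    intro m
    by_contra hcon
    push_neg at hcon
    have h0 : ‖a m‖ = 0 := le_antisymm hcon (norm_nonneg _)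
    have := hprodinv m
    rw [h0, mul_zero] at this
    linarith
  -- finite-range pair comparison
  have main : ∀ k : ℕ, ∃ d ≥ (1:ℝ), ∀ z ∈ K, ∀ u : ℕ → H, GenEigRec a b z u →
      (‖u 0‖ ^ 2 + ‖u 1‖ ^ 2 ≤ d * (‖u k‖ ^ 2 + ‖u (k + 1)‖ ^ 2)) ∧
      (‖u k‖ ^ 2 + ‖u (k + 1)‖ ^ 2 ≤ d * (‖u 0‖ ^ 2 + ‖u 1‖ ^ 2)) := by
    intro k
    induction k with
    | zero =>
      exact ⟨1, le_refl 1, fun z hz u hu => by norm_num⟩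
    | succ k ih =>
      obtain ⟨d, hd1, hd⟩ := ih
      set F : ℝ := ‖a' (k + 1)‖ * (R + ‖b (k + 1)‖ + ‖a k‖) with hFdef
      set G : ℝ := ‖a' k‖ * (R + ‖b (k + 1)‖ + ‖a (k + 1)‖) with hGdef
      refine ⟨d * ((1 + 2 * F ^ 2) * (1 + 2 * G ^ 2)), ?_, ?_⟩
      · have : (1:ℝ) ≤ (1 + 2 * F ^ 2) * (1 + 2 * G ^ 2) := by nlinarith [sq_nonneg F, sq_nonneg G]
        nlinarith
      intro z hz u hu
      obtain ⟨hL, hU⟩ := hd z hz u hu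
      have h := hu k
      -- the three norms
      have hy1 : ‖z • u (k + 1)‖ ≤ R * ‖u (k + 1)‖ := by
        rw [norm_smul]
        exact mul_le_mul_of_nonneg_right (hKR z hz) (norm_nonneg _)
      have hy2 := (b (k + 1)).le_opNorm (u (k + 1))
      -- forward step
      have e1 : u (k + 2) = a' (k + 1)
          (z • u (k + 1) - b (k + 1) (u (k + 1)) - adjoint (a k) (u k)) := by
        have e0 : a (k + 1) (u (k + 2)) =
            z • u (k + 1) - b (k + 1) (u (k + 1)) - adjoint (a k) (u k) := by
          rw [← h]; abel
        rw [← e0, inverts_apply (hinv (k + 1))]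
      have hy3 : ‖adjoint (a k) (u k)‖ ≤ ‖a k‖ * ‖u k‖ := by
        have h' := (adjoint (a k)).le_opNorm (u k)
        rwa [norm_adjoint_eq] at h'
      have nb : ‖u (k + 2)‖ ≤ F * (‖u k‖ + ‖u (k + 1)‖) := by
        rw [e1]
        have step1 : ‖z • u (k + 1) - b (k + 1) (u (k + 1)) - adjoint (a k) (u k)‖ ≤
            ‖z • u (k + 1)‖ + ‖b (k + 1) (u (k + 1))‖ + ‖adjoint (a k) (u k)‖ := by
          calc ‖z • u (k + 1) - b (k + 1) (u (k + 1)) - adjoint (a k) (u k)‖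
              ≤ ‖z • u (k + 1) - b (k + 1) (u (k + 1))‖ + ‖adjoint (a k) (u k)‖ :=
                norm_sub_le _ _
            _ ≤ ‖z • u (k + 1)‖ + ‖b (k + 1) (u (k + 1))‖ + ‖adjoint (a k) (u k)‖ := by
                have := norm_sub_le (z • u (k + 1)) (b (k + 1) (u (k + 1)))
                linarith
        have step2 := (a' (k + 1)).le_opNorm
          (z • u (k + 1) - b (k + 1) (u (k + 1)) - adjoint (a k) (u k))
        have hb1 := norm_nonneg (b (k + 1))
        have hn1 := norm_nonneg (u k)
        have hn2 := norm_nonneg (u (k + 1))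
        have hn3 := norm_nonneg (a' (k + 1))
        have hn4 := norm_nonneg (a k)
        have hy' : ‖z • u (k + 1) - b (k + 1) (u (k + 1)) - adjoint (a k) (u k)‖ ≤
            (R + ‖b (k + 1)‖ + ‖a k‖) * (‖u k‖ + ‖u (k + 1)‖) := by
          nlinarith [mul_nonneg hR0 hn1, mul_nonneg hb1 hn1, mul_nonneg hn4 hn2]
        calc ‖(a' (k + 1)) (z • u (k + 1) - b (k + 1) (u (k + 1)) - adjoint (a k) (u k))‖
            ≤ ‖a' (k + 1)‖ * ‖z • u (k + 1) - b (k + 1) (u (k + 1)) - adjoint (a k) (u k)‖ :=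
              step2
          _ ≤ ‖a' (k + 1)‖ * ((R + ‖b (k + 1)‖ + ‖a k‖) * (‖u k‖ + ‖u (k + 1)‖)) :=
              mul_le_mul_of_nonneg_left hy' hn3
          _ = F * (‖u k‖ + ‖u (k + 1)‖) := by rw [hFdef]; ring
      -- backward step
      have e2 : u k = adjoint (a' k)
          (z • u (k + 1) - b (k + 1) (u (k + 1)) - a (k + 1) (u (k + 2))) := by
        have e0 : adjoint (a k) (u k) =
            z • u (k + 1) - b (k + 1) (u (k + 1)) - a (k + 1) (u (k + 2)) := by
          rw [← h]; abel
        rw [← e0, inverts_adjoint_apply (hinv k)]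
      have nb' : ‖u k‖ ≤ G * (‖u (k + 1)‖ + ‖u (k + 2)‖) := by
        rw [e2]
        have hy3' := (a (k + 1)).le_opNorm (u (k + 2))
        have step1 : ‖z • u (k + 1) - b (k + 1) (u (k + 1)) - a (k + 1) (u (k + 2))‖ ≤
            ‖z • u (k + 1)‖ + ‖b (k + 1) (u (k + 1))‖ + ‖a (k + 1) (u (k + 2))‖ := by
          calc ‖z • u (k + 1) - b (k + 1) (u (k + 1)) - a (k + 1) (u (k + 2))‖
              ≤ ‖z • u (k + 1) - b (k + 1) (u (k + 1))‖ + ‖a (k + 1) (u (k + 2))‖ :=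
                norm_sub_le _ _
            _ ≤ ‖z • u (k + 1)‖ + ‖b (k + 1) (u (k + 1))‖ + ‖a (k + 1) (u (k + 2))‖ := by
                have := norm_sub_le (z • u (k + 1)) (b (k + 1) (u (k + 1)))
                linarith
        have step2 := (adjoint (a' k)).le_opNorm
          (z • u (k + 1) - b (k + 1) (u (k + 1)) - a (k + 1) (u (k + 2)))
        rw [norm_adjoint_eq] at step2
        have hb1 := norm_nonneg (b (k + 1))
        have hn2 := norm_nonneg (u (k + 1))
        have hn2' := norm_nonneg (u (k + 2))
        have hn3 := norm_nonneg (a' k)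
        have hn4 := norm_nonneg (a (k + 1))
        have hy' : ‖z • u (k + 1) - b (k + 1) (u (k + 1)) - a (k + 1) (u (k + 2))‖ ≤
            (R + ‖b (k + 1)‖ + ‖a (k + 1)‖) * (‖u (k + 1)‖ + ‖u (k + 2)‖) := by
          nlinarith [mul_nonneg hR0 hn2', mul_nonneg hb1 hn2', mul_nonneg hn4 hn2]
        calc ‖(adjoint (a' k)) (z • u (k + 1) - b (k + 1) (u (k + 1)) - a (k + 1) (u (k + 2)))‖
            ≤ ‖a' k‖ * ‖z • u (k + 1) - b (k + 1) (u (k + 1)) - a (k + 1) (u (k + 2))‖ :=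
              step2
          _ ≤ ‖a' k‖ * ((R + ‖b (k + 1)‖ + ‖a (k + 1)‖) * (‖u (k + 1)‖ + ‖u (k + 2)‖)) :=
              mul_le_mul_of_nonneg_left hy' hn3
          _ = G * (‖u (k + 1)‖ + ‖u (k + 2)‖) := by rw [hGdef]; ring
      -- squared comparisons
      have sqf : ‖u (k + 1)‖ ^ 2 + ‖u (k + 2)‖ ^ 2 ≤
          (1 + 2 * F ^ 2) * (‖u k‖ ^ 2 + ‖u (k + 1)‖ ^ 2) := by
        have h2 : ‖u (k + 2)‖ ^ 2 ≤ (F * (‖u k‖ + ‖u (k + 1)‖)) ^ 2 :=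
          pow_le_pow_left₀ (norm_nonneg _) nb 2
        nlinarith [sq_nonneg (‖u k‖ - ‖u (k + 1)‖), sq_nonneg F, norm_nonneg (u k),
          norm_nonneg (u (k + 1)), sq_nonneg (F * (‖u k‖ - ‖u (k + 1)‖))]
      have sqb : ‖u k‖ ^ 2 + ‖u (k + 1)‖ ^ 2 ≤
          (1 + 2 * G ^ 2) * (‖u (k + 1)‖ ^ 2 + ‖u (k + 2)‖ ^ 2) := by
        have h2 : ‖u k‖ ^ 2 ≤ (G * (‖u (k + 1)‖ + ‖u (k + 2)‖)) ^ 2 :=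
          pow_le_pow_left₀ (norm_nonneg _) nb' 2
        nlinarith [sq_nonneg (‖u (k + 1)‖ - ‖u (k + 2)‖), sq_nonneg G, norm_nonneg (u (k + 1)),
          norm_nonneg (u (k + 2)), sq_nonneg (G * (‖u (k + 1)‖ - ‖u (k + 2)‖))]
      have hF1 : (1:ℝ) ≤ 1 + 2 * F ^ 2 := by nlinarith [sq_nonneg F]
      have hG1 : (1:ℝ) ≤ 1 + 2 * G ^ 2 := by nlinarith [sq_nonneg G]
      have hP0 : (0:ℝ) ≤ ‖u (k + 1)‖ ^ 2 + ‖u (k + 2)‖ ^ 2 := by positivity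
      have hP0' : (0:ℝ) ≤ ‖u k‖ ^ 2 + ‖u (k + 1)‖ ^ 2 := by positivity
      have hs0 : (0:ℝ) ≤ ‖u 0‖ ^ 2 + ‖u 1‖ ^ 2 := by positivity
      have hd0 : (0:ℝ) ≤ d := le_trans zero_le_one hd1
      have hE : (1 + 2 * G ^ 2) ≤ (1 + 2 * F ^ 2) * (1 + 2 * G ^ 2) :=
        le_mul_of_one_le_left (by positivity) hF1
      have hE' : (1 + 2 * F ^ 2) ≤ (1 + 2 * F ^ 2) * (1 + 2 * G ^ 2) :=
        le_mul_of_one_le_right (by positivity) hG1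
      constructor
      · calc ‖u 0‖ ^ 2 + ‖u 1‖ ^ 2 ≤ d * (‖u k‖ ^ 2 + ‖u (k + 1)‖ ^ 2) := hL
          _ ≤ d * ((1 + 2 * G ^ 2) * (‖u (k + 1)‖ ^ 2 + ‖u (k + 2)‖ ^ 2)) :=
              mul_le_mul_of_nonneg_left sqb hd0
          _ = (d * (1 + 2 * G ^ 2)) * (‖u (k + 1)‖ ^ 2 + ‖u (k + 2)‖ ^ 2) := by ring
          _ ≤ (d * ((1 + 2 * F ^ 2) * (1 + 2 * G ^ 2))) *
              (‖u (k + 1)‖ ^ 2 + ‖u (k + 2)‖ ^ 2) :=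
              mul_le_mul_of_nonneg_right (mul_le_mul_of_nonneg_left hE hd0) hP0
          _ = d * ((1 + 2 * F ^ 2) * (1 + 2 * G ^ 2)) *
              (‖u (k + 1)‖ ^ 2 + ‖u (k + 2)‖ ^ 2) := by ring
      · calc ‖u (k + 1)‖ ^ 2 + ‖u (k + 2)‖ ^ 2
            ≤ (1 + 2 * F ^ 2) * (‖u k‖ ^ 2 + ‖u (k + 1)‖ ^ 2) := sqf
          _ ≤ (1 + 2 * F ^ 2) * (d * (‖u 0‖ ^ 2 + ‖u 1‖ ^ 2)) :=
              mul_le_mul_of_nonneg_left hU (by positivity)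
          _ = (d * (1 + 2 * F ^ 2)) * (‖u 0‖ ^ 2 + ‖u 1‖ ^ 2) := by ring
          _ ≤ (d * ((1 + 2 * F ^ 2) * (1 + 2 * G ^ 2))) * (‖u 0‖ ^ 2 + ‖u 1‖ ^ 2) :=
              mul_le_mul_of_nonneg_right (mul_le_mul_of_nonneg_left hE' hd0) hs0
  choose d hd1 hd2 using main
  set M₀ : ℕ := max M₁ M₂ with hM₀def
  obtain ⟨Dfin, hD1, hDk⟩ : ∃ D : ℝ, 1 ≤ D ∧ ∀ k < M₀, d k ≤ D :=
    ⟨∏ k ∈ Finset.range M₀, d k, myprod_one_le _ _ (fun i _ => hd1 i),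
      fun k hk => myprod_single_le _ _ (fun i _ => hd1 i) (Finset.mem_range.mpr hk)⟩
  obtain ⟨Aup, hA1, hAm⟩ : ∃ A : ℝ, 1 ≤ A ∧ ∀ m < M₀ + N, ‖a m‖ ≤ A :=
    ⟨∏ m ∈ Finset.range (M₀ + N), (1 + ‖a m‖),
      myprod_one_le _ _ (fun i _ => by linarith [norm_nonneg (a i)]),
      fun m hm => le_trans (by show ‖a m‖ ≤ 1 + ‖a m‖; linarith [norm_nonneg (a m)])
        (myprod_single_le (fun i => 1 + ‖a i‖) _
          (fun i _ => by show (1:ℝ) ≤ 1 + ‖a i‖; linarith [norm_nonneg (a i)])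
          (Finset.mem_range.mpr hm))⟩
  obtain ⟨Bup, hB1, hBm⟩ : ∃ B : ℝ, 1 ≤ B ∧ ∀ m < M₀ + N, ‖a' m‖ ≤ B :=
    ⟨∏ m ∈ Finset.range (M₀ + N), (1 + ‖a' m‖),
      myprod_one_le _ _ (fun i _ => by linarith [norm_nonneg (a' i)]),
      fun m hm => le_trans (by show ‖a' m‖ ≤ 1 + ‖a' m‖; linarith [norm_nonneg (a' m)])
        (myprod_single_le (fun i => 1 + ‖a' i‖) _
          (fun i _ => by show (1:ℝ) ≤ 1 + ‖a' i‖; linarith [norm_nonneg (a' i)])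
          (Finset.mem_range.mpr hm))⟩
  have h12 : (0:ℝ) ≤ c₁ * c₂ := (mul_pos hc₁0 hc₂0).le
  have h12A : (0:ℝ) ≤ c₁ * c₂ * Aup := mul_nonneg h12 (by linarith)
  have h12AB : (0:ℝ) ≤ c₁ * c₂ * Aup * Bup := mul_nonneg h12A (by linarith)
  have h1cc : (1:ℝ) ≤ c₁ * c₂ := by nlinarith
  have h1A : (1:ℝ) ≤ c₁ * c₂ * Aup := le_trans h1cc (le_mul_of_one_le_right h12 hA1)
  have h1B : (1:ℝ) ≤ c₁ * c₂ * Bup := le_trans h1cc (le_mul_of_one_le_right h12 hB1)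
  have hcc : c₁ * c₂ ≤ c₁ * c₂ * Aup * Bup * Dfin := by
    calc c₁ * c₂ ≤ c₁ * c₂ * Aup := le_mul_of_one_le_right h12 hA1
      _ ≤ c₁ * c₂ * Aup * Bup := le_mul_of_one_le_right h12A hB1
      _ ≤ c₁ * c₂ * Aup * Bup * Dfin := le_mul_of_one_le_right h12AB hD1
  have h1c' : (1:ℝ) ≤ c₁ * c₂ * Aup * Bup * Dfin := le_trans h1cc hcc
  refine ⟨c₁ * c₂ * Aup * Bup * Dfin, h1c', ?_⟩
  have hc'0 : (0:ℝ) < c₁ * c₂ * Aup * Bup * Dfin := lt_of_lt_of_le one_pos h1c'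
  intro z hz u hu n hn
  obtain ⟨hune, hrec⟩ := hu
  have hpr : pr (u 0) (u 1) ≠ 0 := by
    intro hcon
    obtain ⟨h0, h1⟩ := pr_eq_zero hcon
    exact hune (genEig_zero a b a' hinv hrec h0 h1)
  have ht : 0 < ‖pr (u 0) (u 1)‖ := norm_pos_iff.mpr hpr
  set t : ℝ := ‖pr (u 0) (u 1)‖ with htdef
  have hts : t ^ 2 = ‖u 0‖ ^ 2 + ‖u 1‖ ^ 2 := pr_norm_sq _ _
  have hP : ‖pr (u (n - 1)) (u n)‖ ^ 2 = ‖u (n - 1)‖ ^ 2 + ‖u n‖ ^ 2 := pr_norm_sq _ _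
  have hs0 : (0:ℝ) ≤ ‖u 0‖ ^ 2 + ‖u 1‖ ^ 2 := by positivity
  have hP0 : (0:ℝ) ≤ ‖u (n - 1)‖ ^ 2 + ‖u n‖ ^ 2 := by positivity
  by_cases hcase : M₀ ≤ n
  · -- asymptotic regime
    have hA : (0:ℝ) < ‖a (n + N - 1)‖ := ha_pos _
    have hnd2 := hnd' (pr (u (n - 1)) (u n)) z hz n (le_trans (le_max_left M₁ M₂) hcase)
    set S : ℝ := turanS a a' b N z u n with hSdef
    have hSeq : (inner ℂ (turanOp a a' b N z n (pr (u (n - 1)) (u n)))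
        (pr (u (n - 1)) (u n)) : ℂ).re = S := rfl
    rw [hSeq, hP] at hnd2
    set A : ℝ := ‖a (n + N - 1)‖ with hAdef'
    set P : ℝ := ‖u (n - 1)‖ ^ 2 + ‖u n‖ ^ 2 with hPdef
    have habs : |A⁻¹ * S| = A⁻¹ * |S| := by
      rw [abs_mul, abs_of_nonneg (inv_nonneg.mpr hA.le)]
    rw [habs] at hnd2
    obtain ⟨f1, f2⟩ := hnd2
    -- normalised eigenvector
    have hwrec : GenEigRec a b z (fun m => ((t⁻¹ : ℝ) : ℂ) • u m) := by
      intro m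
      have h := hrec m
      simp only [map_smul]
      rw [← smul_add, ← smul_add, h, smul_comm]
    have hwnorm : ‖pr ((((t⁻¹ : ℝ)) : ℂ) • u 0) ((((t⁻¹ : ℝ)) : ℂ) • u 1)‖ = 1 := by
      rw [pr_smul, norm_smul, Complex.norm_real, Real.norm_eq_abs,
        abs_of_pos (inv_pos.mpr ht), ← htdef, inv_mul_cancel₀ (ne_of_gt ht)]
    have hS2 := hS' z hz _ hwrec hwnorm n (le_trans (le_max_right M₁ M₂) hcase)
    rw [turanS_smul a a' b N z u t⁻¹ n, ← hSdef] at hS2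
    have habs2 : |t⁻¹ * t⁻¹ * S| = t⁻¹ * t⁻¹ * |S| := by
      rw [abs_mul, abs_of_nonneg (by positivity : (0:ℝ) ≤ t⁻¹ * t⁻¹)]
    rw [habs2] at hS2
    obtain ⟨f3, f4⟩ := hS2
    have htne : t ≠ 0 := ne_of_gt ht
    have hAne : A ≠ 0 := ne_of_gt hA
    -- derived bounds
    have g1 : A * P ≤ c₁ * |S| := by
      have h' : P ≤ c₁ * (A⁻¹ * |S|) := (inv_mul_le_iff₀ hc₁0).mp f1
      calc A * P ≤ A * (c₁ * (A⁻¹ * |S|)) := mul_le_mul_of_nonneg_left h' hA.le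
        _ = c₁ * |S| := by field_simp
    have g2 : |S| ≤ c₁ * (A * P) := by
      calc |S| = A * (A⁻¹ * |S|) := by field_simp
        _ ≤ A * (c₁ * P) := mul_le_mul_of_nonneg_left f2 hA.le
        _ = c₁ * (A * P) := by ring
    have g3 : t ^ 2 ≤ c₂ * |S| := by
      have h' : (1:ℝ) ≤ c₂ * (t⁻¹ * t⁻¹ * |S|) := (inv_mul_le_iff₀ hc₂0).mp (by linarith)
      have h'' := mul_le_mul_of_nonneg_left h' (sq_nonneg t)
      calc t ^ 2 = t ^ 2 * 1 := by ring
        _ ≤ t ^ 2 * (c₂ * (t⁻¹ * t⁻¹ * |S|)) := h''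
        _ = c₂ * |S| := by field_simp
    have g4 : |S| ≤ c₂ * t ^ 2 := by
      have h'' := mul_le_mul_of_nonneg_left f4 (sq_nonneg t)
      calc |S| = t ^ 2 * (t⁻¹ * t⁻¹ * |S|) := by field_simp
        _ ≤ t ^ 2 * c₂ := h''
        _ = c₂ * t ^ 2 := by ring
    have hAP0 : (0:ℝ) ≤ A * P := mul_nonneg hA.le hP0
    have hup : A * P ≤ c₁ * c₂ * t ^ 2 := by
      calc A * P ≤ c₁ * |S| := g1
        _ ≤ c₁ * (c₂ * t ^ 2) := mul_le_mul_of_nonneg_left g4 hc₁0.le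
        _ = c₁ * c₂ * t ^ 2 := by ring
    have hlo : t ^ 2 ≤ c₁ * c₂ * (A * P) := by
      calc t ^ 2 ≤ c₂ * |S| := g3
        _ ≤ c₂ * (c₁ * (A * P)) := mul_le_mul_of_nonneg_left g2 hc₂0.le
        _ = c₁ * c₂ * (A * P) := by ring
    constructor
    · rw [inv_mul_le_iff₀ hc'0, ← hts]
      calc t ^ 2 ≤ c₁ * c₂ * (A * P) := hlo
        _ ≤ c₁ * c₂ * Aup * Bup * Dfin * (A * P) := mul_le_mul_of_nonneg_right hcc hAP0
    · rw [← hts]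
      calc A * P ≤ c₁ * c₂ * t ^ 2 := hup
        _ ≤ c₁ * c₂ * Aup * Bup * Dfin * t ^ 2 := mul_le_mul_of_nonneg_right hcc (sq_nonneg t)
  · -- finite regime
    push_neg at hcase
    obtain ⟨k, rfl⟩ : ∃ k, n = k + 1 := ⟨n - 1, (Nat.succ_pred_eq_of_pos hn).symm⟩
    have hk : k < M₀ := by omega
    have hidx : k + 1 + N - 1 = k + N := by omega
    have hidx2 : k + 1 - 1 = k := by omega
    rw [hidx, hidx2]
    rw [hidx2] at hP hP0
    obtain ⟨pL, pU⟩ := hd2 k z hz u hrec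
    set A : ℝ := ‖a (k + N)‖ with hA2
    have hAup : A ≤ Aup := hAm _ (by omega)
    have hBA : (1:ℝ) ≤ Bup * A := by
      have h1 := hprodinv (k + N)
      have h2 := hBm (k + N) (by omega)
      have h3 := (ha_pos (k + N)).le
      nlinarith [norm_nonneg (a' (k + N))]
    have hA0 : (0:ℝ) ≤ A := (ha_pos _).le
    set s : ℝ := ‖u 0‖ ^ 2 + ‖u 1‖ ^ 2 with hsdef
    set P : ℝ := ‖u k‖ ^ 2 + ‖u (k + 1)‖ ^ 2 with hPdef
    have hdk := hDk k hk
    have hd1k := hd1 k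
    have hsD : s ≤ Dfin * P := by nlinarith
    have hPD : P ≤ Dfin * s := by nlinarith
    have hs0' : (0:ℝ) ≤ s := by rw [hsdef]; positivity
    have hDB0 : (0:ℝ) ≤ Dfin * Bup := mul_nonneg (by linarith) (by linarith)
    have hAD0 : (0:ℝ) ≤ Aup * Dfin := mul_nonneg (by linarith) (by linarith)
    have hcDB : Dfin * Bup ≤ c₁ * c₂ * Aup * Bup * Dfin := by
      calc Dfin * Bup = 1 * (Dfin * Bup) := by ring
        _ ≤ (c₁ * c₂ * Aup) * (Dfin * Bup) := mul_le_mul_of_nonneg_right h1A hDB0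
        _ = c₁ * c₂ * Aup * Bup * Dfin := by ring
    have hcAD : Aup * Dfin ≤ c₁ * c₂ * Aup * Bup * Dfin := by
      calc Aup * Dfin = 1 * (Aup * Dfin) := by ring
        _ ≤ (c₁ * c₂ * Bup) * (Aup * Dfin) := mul_le_mul_of_nonneg_right h1B hAD0
        _ = c₁ * c₂ * Aup * Bup * Dfin := by ring
    constructor
    · rw [inv_mul_le_iff₀ hc'0]
      calc s = s * 1 := by ring
        _ ≤ s * (Bup * A) := mul_le_mul_of_nonneg_left hBA hs0'
        _ ≤ (Dfin * P) * (Bup * A) :=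
            mul_le_mul_of_nonneg_right hsD (mul_nonneg (by linarith) hA0)
        _ = (Dfin * Bup) * (A * P) := by ring
        _ ≤ (c₁ * c₂ * Aup * Bup * Dfin) * (A * P) :=
            mul_le_mul_of_nonneg_right hcDB (mul_nonneg hA0 hP0)
    · calc A * P ≤ Aup * P := mul_le_mul_of_nonneg_right hAup hP0
        _ ≤ Aup * (Dfin * s) := mul_le_mul_of_nonneg_left hPD (by linarith)
        _ = (Aup * Dfin) * s := by ring
        _ ≤ (c₁ * c₂ * Aup * Bup * Dfin) * s := mul_le_mul_of_nonneg_right hcAD hs0'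
end
end

section
/- Let z ∈ ℂ. If every generalised eigenvector associated with z belongs to ℓ²(ℕ;𝓗), then the map T : u ↦ u_0 is a continuous linear isomorphism from the closed subspace {u ∈ ℓ²(ℕ;𝓗) : 𝒜u = zu} onto 𝓗 (in particular this kernel subspace is isomorphic to 𝓗 as a topological vector space). -/
open ContinuousLinearMap Filter
open scoped ENNReal NNReal
noncomputable section

variable {H : Type*} [NormedAddCommGroup H] [InnerProductSpace ℂ H] [CompleteSpace H]

/-- Solution operators: `solOp n v` is the `n`-th entry of the unique solution of
`𝒜u = zu` with `u₀ = v`. -/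
def solOp (a a' b : ℕ → H →L[ℂ] H) (z : ℂ) : ℕ → (H →L[ℂ] H)
  | 0 => 1
  | 1 => a' 0 ∘L (z • (1 : H →L[ℂ] H) - b 0)
  | n + 2 => a' (n + 1) ∘L ((z • (1 : H →L[ℂ] H) - b (n + 1)) ∘L solOp a a' b z (n + 1)
      - adjoint (a n) ∘L solOp a a' b z n)

theorem solOp_rec (a b a' : ℕ → H →L[ℂ] H) (hinv : ∀ n, Inverts (a n) (a' n)) (z : ℂ) (v : H) :
    GenEigRec a b z (fun n => solOp a a' b z n v) := by
  intro n
  have hae : ∀ m w, a m (a' m w) = w := by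
    intro m w
    have := DFunLike.congr_fun (hinv m).2 w
    simpa using this
  have h2 : a (n + 1) (solOp a a' b z (n + 2) v)
      = z • solOp a a' b z (n + 1) v - b (n + 1) (solOp a a' b z (n + 1) v)
        - adjoint (a n) (solOp a a' b z n v) := by
    show a (n + 1) ((a' (n + 1) ∘L _) v) = _
    rw [ContinuousLinearMap.comp_apply, hae]
    simp [sub_smul, smul_smul]
  rw [h2]; abel

theorem solOp_jacobi (a b a' : ℕ → H →L[ℂ] H) (hinv : ∀ n, Inverts (a n) (a' n)) (z : ℂ)
    (v : H) (n : ℕ) :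
    jacobiA a b (fun k => solOp a a' b z k v) n = z • solOp a a' b z n v := by
  cases n with
  | zero =>
      have hae : ∀ w, a 0 (a' 0 w) = w := by
        intro w
        have := DFunLike.congr_fun (hinv 0).2 w
        simpa using this
      show b 0 (solOp a a' b z 0 v) + a 0 (solOp a a' b z 1 v) = _
      show b 0 ((1 : H →L[ℂ] H) v) + a 0 ((a' 0 ∘L (z • (1 : H →L[ℂ] H) - b 0)) v) = _
      rw [ContinuousLinearMap.comp_apply, hae]
      simp
      rfl
  | succ m => exact solOp_rec a b a' hinv z v m

theorem solOp_memℓp (a b a' : ℕ → H →L[ℂ] H) (hinv : ∀ n, Inverts (a n) (a' n)) (z : ℂ)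
    (hall : ∀ u : ℕ → H, IsGenEig a b z u → MemL2 u) (v : H) :
    Memℓp (fun n => solOp a a' b z n v) 2 := by
  have hs : Summable fun n => ‖solOp a a' b z n v‖ ^ 2 := by
    by_cases h0 : (fun n => solOp a a' b z n v) = 0
    · have : (fun n => ‖solOp a a' b z n v‖ ^ 2) = fun _ => 0 := by
        funext n
        have : solOp a a' b z n v = 0 := congrFun h0 n
        simp [this]
      rw [this]; exact summable_zero
    · exact hall _ ⟨h0, solOp_rec a b a' hinv z v⟩
  apply memℓp_gen
  have h2 : ((2 : ℝ≥0∞).toReal) = ((2 : ℕ) : ℝ) := by norm_num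
  simp only [h2, Real.rpow_natCast]
  exact_mod_cast hs

/-- Corollary `cor:4`: if every generalised eigenvector associated with `z`
is in `ℓ²`, then `u ↦ u₀` is a continuous linear isomorphism from
`{u ∈ ℓ² : 𝒜u = zu}` onto `𝓗`; we express this by exhibiting a continuous linear map
`S : 𝓗 → ℓ²` which is a two-sided inverse of evaluation at `0` on that subspace. -/

theorem statement10 (a b a' : ℕ → H →L[ℂ] H)
    (hinv : ∀ n, Inverts (a n) (a' n)) (hb : ∀ n, IsSelfAdjoint (b n))
    (z : ℂ) (hall : ∀ u : ℕ → H, IsGenEig a b z u → MemL2 u) :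
    ∃ S : H →L[ℂ] lp (fun _ : ℕ => H) 2,
      (∀ v : H, ∀ n, jacobiA a b (fun k => S v k) n = z • (S v) n) ∧
      (∀ v : H, (S v) 0 = v) ∧
      (∀ x : lp (fun _ : ℕ => H) 2,
        (∀ n, jacobiA a b (fun k => x k) n = z • x n) → S (x 0) = x) := by
  classical
  -- the underlying linear map
  set L : ℕ → (H →L[ℂ] H) := solOp a a' b z with hL
  let g : H →ₗ[ℂ] lp (fun _ : ℕ => H) 2 :=
    { toFun := fun v => ⟨fun n => L n v, solOp_memℓp a b a' hinv z hall v⟩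
      map_add' := fun v w => Subtype.ext (funext fun n => by simp only [map_add]; rfl)
      map_smul' := fun c v => Subtype.ext (funext fun n => by simp only [map_smul, RingHom.id_apply]; rfl) }
  have hg_apply : ∀ v n, (g v : ∀ _ : ℕ, H) n = L n v := fun v n => rfl
  -- componentwise convergence in lp
  have hcomp : ∀ (F : ℕ → lp (fun _ : ℕ => H) 2) (y : lp (fun _ : ℕ => H) 2),
      Tendsto F atTop (nhds y) → ∀ n, Tendsto (fun k => (F k : ∀ _ : ℕ, H) n) atTop (nhds (y n)) := by
    intro F y hF n
    rw [tendsto_iff_norm_sub_tendsto_zero] at hF ⊢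
    refine squeeze_zero (fun k => norm_nonneg _) (fun k => ?_) hF
    have := lp.norm_apply_le_norm (p := (2 : ℝ≥0∞)) (by norm_num) (F k - y) n
    simpa using this
  have hclosed : ∀ (u : ℕ → H) (x y), Tendsto u atTop (nhds x) →
      Tendsto (⇑g ∘ u) atTop (nhds y) → y = g x := by
    intro u x y hu hgu
    refine lp.ext (funext fun n => ?_)
    have h1 : Tendsto (fun k => L n (u k)) atTop (nhds (L n x)) :=
      ((L n).continuous.tendsto x).comp hu
    have h2 : Tendsto (fun k => (g (u k) : ∀ _ : ℕ, H) n) atTop (nhds (y n)) :=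
      hcomp (⇑g ∘ u) y hgu n
    exact tendsto_nhds_unique h2 h1
  refine ⟨ContinuousLinearMap.ofSeqClosedGraph hclosed, ?_, ?_, ?_⟩
  · intro v n
    exact solOp_jacobi a b a' hinv z v n
  · intro v
    show L 0 v = v
    rfl
  · intro x hx
    refine lp.ext (funext fun n => ?_)
    show L n (x 0) = x n
    have key : ∀ n, L n (x 0) = x n ∧ L (n + 1) (x 0) = x (n + 1) := by
      intro n
      induction n with
      | zero =>
          constructor
          · rfl
          · have h0 := hx 0
            have hae : ∀ w, a' 0 (a 0 w) = w := by
              intro w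
              have := DFunLike.congr_fun (hinv 0).1 w
              simpa using this
            have h0' : b 0 (x 0) + a 0 (x 1) = z • x 0 := h0
            show (a' 0 ∘L (z • (1 : H →L[ℂ] H) - b 0)) (x 0) = x 1
            have : a 0 (x 1) = z • x 0 - b 0 (x 0) := by
              rw [← h0']; abel
            calc (a' 0 ∘L (z • (1 : H →L[ℂ] H) - b 0)) (x 0)
                = a' 0 (z • x 0 - b 0 (x 0)) := by simp
              _ = a' 0 (a 0 (x 1)) := by rw [this]
              _ = x 1 := hae _
      | succ m ih =>
          refine ⟨ih.2, ?_⟩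
          have hrec := hx (m + 1)
          have hrec' : adjoint (a m) (x m) + b (m + 1) (x (m + 1)) + a (m + 1) (x (m + 2))
              = z • x (m + 1) := hrec
          have hae : ∀ w, a' (m + 1) (a (m + 1) w) = w := by
            intro w
            have := DFunLike.congr_fun (hinv (m + 1)).1 w
            simpa using this
          have ha : a (m + 1) (x (m + 2))
              = z • x (m + 1) - b (m + 1) (x (m + 1)) - adjoint (a m) (x m) := by
            rw [← hrec']; abel
          show (a' (m + 1) ∘L ((z • (1 : H →L[ℂ] H) - b (m + 1)) ∘L L (m + 1)
              - adjoint (a m) ∘L L m)) (x 0) = x (m + 2)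
          calc (a' (m + 1) ∘L ((z • (1 : H →L[ℂ] H) - b (m + 1)) ∘L L (m + 1)
              - adjoint (a m) ∘L L m)) (x 0)
              = a' (m + 1) (z • L (m + 1) (x 0) - b (m + 1) (L (m + 1) (x 0))
                - adjoint (a m) (L m (x 0))) := by simp
            _ = a' (m + 1) (z • x (m + 1) - b (m + 1) (x (m + 1)) - adjoint (a m) (x m)) := by
                rw [ih.1, ih.2]
            _ = a' (m + 1) (a (m + 1) (x (m + 2))) := by rw [ha]
            _ = x (m + 2) := hae _
    exact (key n).1
end
end

section
/- Let (α_n : n ≥ 0) be a sequence of bounded operators on 𝓗, λ ∈ ℝ, and let u be the generalised eigenvector associated with λ with (u_0, u_1)ᵗ = α ∈ 𝓗 ⊕ 𝓗. Then for every n ≥ 1, S_n(α, λ) = ⟨sym([[α_n a_n^*, −(λ·Id − b_n) a_{n-1}^{-1} α_{n-1} a_n], [0, a_n^* a_{n-1}^{-1} α_{n-1} a_n]])·(u_n, u_{n+1})ᵗ, (u_n, u_{n+1})ᵗ⟩. -/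
open ContinuousLinearMap Filter
open scoped ENNReal NNReal
noncomputable section

variable {H : Type*} [NormedAddCommGroup H] [InnerProductSpace ℂ H] [CompleteSpace H]

private lemma blk_pr' (A B C D : H →L[ℂ] H) (x y : H) :
    blk A B C D (pr x y) = pr (A x + B y) (C x + D y) := rfl

private lemma inner_pr' (x y x' y' : H) :
    (inner ℂ (pr x y) (pr x' y') : ℂ) = inner ℂ x x' + inner ℂ y y' := by
  simp [pr, WithLp.prod_inner_apply]

private lemma re_inner_sym' (X : H2 H →L[ℂ] H2 H) (v : H2 H) :
    (inner ℂ (sym X v) v : ℂ).re = (inner ℂ (X v) v : ℂ).re := by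
  simp only [sym, coe_smul', Pi.smul_apply, add_apply, inner_smul_left, inner_add_left,
    adjoint_inner_left, ← inner_conj_symm v (X v)]
  simp only [map_inv₀, Complex.conj_ofNat, Complex.mul_re, Complex.add_re, Complex.conj_re,
    Complex.add_im, Complex.conj_im, Complex.inv_re, Complex.inv_im]
  simp [Complex.normSq]
  ring

/-- Proposition `prop:4`. -/
theorem statement12 (a b a' al : ℕ → H →L[ℂ] H)
    (hinv : ∀ n, Inverts (a n) (a' n)) (hb : ∀ n, IsSelfAdjoint (b n))
    (lam : ℝ) (α : H2 H) (u : ℕ → H)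
    (hu : GenEigRec a b (lam : ℂ) u) (hα : pr (u 0) (u 1) = α) :
    ∀ n : ℕ, 1 ≤ n →
      commS a b al lam u n =
        (inner ℂ (climOp a a' b al lam n (pr (u n) (u (n + 1))))
          (pr (u n) (u (n + 1))) : ℂ).re := by
  intro n hn
  obtain ⟨m, rfl⟩ : ∃ m, n = m + 1 := ⟨n - 1, (Nat.succ_pred_eq_of_pos hn).symm⟩
  rw [commS, commOp, climOp, re_inner_sym', re_inner_sym']
  simp only [Nat.add_sub_cancel]
  rw [blk_pr', blk_pr', inner_pr', inner_pr']
  set L : H →L[ℂ] H := (lam : ℂ) • (1 : H →L[ℂ] H) - b (m + 1) with hL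
  have hLsa : ContinuousLinearMap.adjoint L = L := by
    have hbsa : ContinuousLinearMap.adjoint (b (m + 1)) = b (m + 1) := by
      rw [← ContinuousLinearMap.star_eq_adjoint]; exact hb (m + 1)
    rw [hL, map_sub, hbsa]
    congr 1
    rw [← ContinuousLinearMap.star_eq_adjoint, star_smul, star_one, Complex.star_def,
      Complex.conj_ofReal]
  have h0 : ContinuousLinearMap.adjoint (a m) (u m) = L (u (m + 1)) - a (m + 1) (u (m + 2)) := by
    have h := hu m
    simp only [hL, ContinuousLinearMap.sub_apply, ContinuousLinearMap.smul_apply,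
      ContinuousLinearMap.one_apply]
    rw [← h]; abel
  set u0 := u m
  set u1 := u (m + 1)
  set u2 := u (m + 2)
  set w : H := a' m (al m (a (m + 1) u2)) with hw
  have h2 : (inner ℂ (L w) u1 : ℂ) = inner ℂ w (L u1) := by
    nth_rewrite 1 [← hLsa]; exact adjoint_inner_left L u1 w
  have h3 : (inner ℂ (ContinuousLinearMap.adjoint (a (m + 1)) w) u2 : ℂ)
      = inner ℂ w (a (m + 1) u2) := adjoint_inner_left _ _ _
  have h4 : (inner ℂ w (ContinuousLinearMap.adjoint (a m) u0) : ℂ)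
      = inner ℂ (al m (a (m + 1) u2)) u0 := by
    rw [adjoint_inner_right]
    congr 1
    rw [hw, ← ContinuousLinearMap.comp_apply, (hinv m).2, ContinuousLinearMap.one_apply]
  congr 1
  simp only [ContinuousLinearMap.comp_apply, ContinuousLinearMap.neg_apply,
    ContinuousLinearMap.zero_apply, zero_add, inner_add_left, inner_neg_left]
  rw [h0, ← hw, h2, h3]
  rw [map_sub, inner_sub_left, ← h4, h0, inner_sub_right]
  ring
end
end

section
/- Let N ≥ 1 be an integer. Assume: (a) lim_{n→∞} ‖a_n^{-1} − T_n‖ = 0; (b) lim_{n→∞} ‖a_n^{-1} b_n − Q_n‖ = 0; (c) lim_{n→∞} ‖a_n^{-1} a_{n-1}^* − R_n‖ = 0; (d) lim_{n→∞} ‖a_n/‖a_n‖ − C_n‖ = 0, for N-periodic sequences (T_n), (Q_n), (R_n), (C_n) of bounded operators on 𝓗 with every R_n and C_n invertible. Then: (i) for every compact set K ⊂ ℂ, sup_{n ≥ 1} sup_{z ∈ K} ‖X_n(z)‖ < ∞; and (ii) lim_{n→∞} ‖diag(a_{n+N-1}/‖a_{n+N-1}‖, a_{n+N-1}^*/‖a_{n+N-1}‖)·E·X_n(z)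 − ℱ^n(z)‖ = 0 uniformly on compact subsets of ℂ, where ℱ^n(z) = diag(C_{n+N-1}, C_{n+N-1}^*)·E·𝓑_{n+N-1}(z)·𝓑_{n+N-2}(z)⋯𝓑_n(z) and 𝓑_k(z) = [[0, Id],[−R_k, z·T_k − Q_k]]. -/
open ContinuousLinearMap Filter
open scoped ENNReal NNReal
noncomputable section

variable {H : Type*} [NormedAddCommGroup H] [InnerProductSpace ℂ H] [CompleteSpace H]

set_option linter.unusedSectionVars false
set_option maxHeartbeats 1000000

lemma myBlk_apply (A B C D : H →L[ℂ] H) (v : H2 H) :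
    blk A B C D v = pr (A v.fst + B v.snd) (C v.fst + D v.snd) := rfl

lemma myBlk_sub (A B C D A' B' C' D' : H →L[ℂ] H) :
    blk A B C D - blk A' B' C' D' = blk (A - A') (B - B') (C - C') (D - D') := by
  ext v
  simp only [sub_apply, myBlk_apply, pr, WithLp.equiv_symm_apply, ← WithLp.toLp_sub, Prod.mk_sub_mk,
    coe_sub', Pi.sub_apply]
  congr 1 <;> abel

lemma myBlk_add (A B C D A' B' C' D' : H →L[ℂ] H) :
    blk A B C D + blk A' B' C' D' = blk (A + A') (B + B') (C + C') (D + D') := by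
  ext v
  simp only [add_apply, myBlk_apply, pr, WithLp.equiv_symm_apply, ← WithLp.toLp_add, Prod.mk_add_mk,
    coe_add', Pi.add_apply]
  congr 1 <;> abel

lemma myBlk_smulD (z : ℂ) (D : H →L[ℂ] H) : blk 0 0 0 (z • D) = z • blk 0 0 0 D := by
  ext v
  simp only [myBlk_apply, pr, smul_apply, WithLp.equiv_symm_apply, ← WithLp.toLp_smul, zero_apply, zero_add,
    coe_smul', Pi.smul_apply, Prod.smul_mk, smul_zero]

lemma myNorm_pr_le (x y : H) : ‖pr x y‖ ≤ ‖x‖ + ‖y‖ := by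
  have h : ‖pr x y‖ ^ 2 = ‖x‖ ^ 2 + ‖y‖ ^ 2 := WithLp.prod_norm_sq_eq_of_L2 _
  nlinarith [norm_nonneg (pr x y), norm_nonneg x, norm_nonneg y, sq_nonneg (‖x‖ + ‖y‖)]

lemma myNorm_fst_le (v : H2 H) : ‖v.fst‖ ≤ ‖v‖ := by
  have h : ‖v‖ ^ 2 = ‖v.fst‖ ^ 2 + ‖v.snd‖ ^ 2 := WithLp.prod_norm_sq_eq_of_L2 _
  nlinarith [norm_nonneg v, norm_nonneg v.fst, norm_nonneg v.snd]

lemma myNorm_snd_le (v : H2 H) : ‖v.snd‖ ≤ ‖v‖ := by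
  have h : ‖v‖ ^ 2 = ‖v.fst‖ ^ 2 + ‖v.snd‖ ^ 2 := WithLp.prod_norm_sq_eq_of_L2 _
  nlinarith [norm_nonneg v, norm_nonneg v.fst, norm_nonneg v.snd]

lemma myNorm_blk_le (A B C D : H →L[ℂ] H) :
    ‖blk A B C D‖ ≤ 2 * (‖A‖ + ‖B‖ + ‖C‖ + ‖D‖) := by
  refine opNorm_le_bound _ (by positivity) fun v => ?_
  rw [myBlk_apply]
  calc ‖pr (A v.fst + B v.snd) (C v.fst + D v.snd)‖
      ≤ ‖A v.fst + B v.snd‖ + ‖C v.fst + D v.snd‖ := myNorm_pr_le _ _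
    _ ≤ (‖A‖ * ‖v.fst‖ + ‖B‖ * ‖v.snd‖) + (‖C‖ * ‖v.fst‖ + ‖D‖ * ‖v.snd‖) := by
        gcongr <;>
          exact (norm_add_le _ _).trans (by gcongr <;> exact le_opNorm _ _)
    _ ≤ (‖A‖ * ‖v‖ + ‖B‖ * ‖v‖) + (‖C‖ * ‖v‖ + ‖D‖ * ‖v‖) := by
        gcongr <;> first | exact myNorm_fst_le v | exact myNorm_snd_le v
    _ ≤ 2 * (‖A‖ + ‖B‖ + ‖C‖ + ‖D‖) * ‖v‖ := by
        nlinarith [mul_nonneg (by positivity : (0:ℝ) ≤ ‖A‖ + ‖B‖ + ‖C‖ + ‖D‖) (norm_nonneg v)]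

lemma myAdjoint_real_smul (r : ℝ) (A : H →L[ℂ] H) : adjoint (r • A) = r • adjoint A := by
  rw [← Complex.coe_smul, ← Complex.coe_smul, LinearIsometryEquiv.map_smulₛₗ,
    Complex.conj_ofReal]

lemma myAdjoint_sub (A B : H →L[ℂ] H) : adjoint (A - B) = adjoint A - adjoint B :=
  map_sub _ _ _

lemma myProdD_norm_le (B : ℕ → (H2 H →L[ℂ] H2 H)) (n k : ℕ) (M : ℝ) (hM : 1 ≤ M)
    (h : ∀ j, ‖B (n + j)‖ ≤ M) : ‖prodD B n k‖ ≤ M ^ k := by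
  induction k with
  | zero =>
    rw [pow_zero]
    refine opNorm_le_bound _ zero_le_one fun x => ?_
    show ‖(1 : H2 H →L[ℂ] H2 H) x‖ ≤ 1 * ‖x‖
    rw [ContinuousLinearMap.one_apply, one_mul]
  | succ k ih =>
    calc ‖prodD B n (k + 1)‖ ≤ ‖B (n + k)‖ * ‖prodD B n k‖ := opNorm_comp_le _ _
      _ ≤ M * M ^ k := mul_le_mul (h k) ih (norm_nonneg _) (le_trans zero_le_one hM)
      _ = M ^ (k + 1) := by ring

lemma myProdD_sub_le (B B' : ℕ → (H2 H →L[ℂ] H2 H)) (n k : ℕ) (M δ : ℝ) (hM : 1 ≤ M)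
    (hδ : 0 ≤ δ) (hB : ∀ j, ‖B (n + j)‖ ≤ M) (hB' : ∀ j, ‖B' (n + j)‖ ≤ M)
    (hd : ∀ j, ‖B (n + j) - B' (n + j)‖ ≤ δ) :
    ‖prodD B n k - prodD B' n k‖ ≤ k * M ^ k * δ := by
  induction k with
  | zero =>
    show ‖(1 : H2 H →L[ℂ] H2 H) - 1‖ ≤ ↑(0:ℕ) * M ^ 0 * δ
    rw [sub_self, norm_zero]
    norm_num
  | succ k ih =>
    have e : prodD B n (k + 1) - prodD B' n (k + 1) =
        B (n + k) ∘L (prodD B n k - prodD B' n k) +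
          (B (n + k) - B' (n + k)) ∘L prodD B' n k := by
      show B (n + k) ∘L prodD B n k - B' (n + k) ∘L prodD B' n k = _
      rw [comp_sub, sub_comp]
      abel
    have hMk : (0:ℝ) ≤ M ^ k := pow_nonneg (by linarith) k
    have hMk1 : M ^ k ≤ M ^ (k + 1) := pow_le_pow_right₀ (by linarith) (Nat.le_succ k)
    calc ‖prodD B n (k + 1) - prodD B' n (k + 1)‖
        ≤ ‖B (n + k) ∘L (prodD B n k - prodD B' n k)‖ +
            ‖(B (n + k) - B' (n + k)) ∘L prodD B' n k‖ := by rw [e]; exact norm_add_le _ _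
      _ ≤ ‖B (n + k)‖ * ‖prodD B n k - prodD B' n k‖ +
            ‖B (n + k) - B' (n + k)‖ * ‖prodD B' n k‖ := by
          gcongr <;> exact opNorm_comp_le _ _
      _ ≤ M * (↑k * M ^ k * δ) + δ * M ^ k :=
          add_le_add
            (mul_le_mul (hB k) ih (norm_nonneg _) (by linarith))
            (mul_le_mul (hd k) (myProdD_norm_le B' n k M hM hB') (norm_nonneg _) hδ)
      _ = ↑k * M ^ (k + 1) * δ + δ * M ^ k := by rw [pow_succ]; ring
      _ ≤ ↑k * M ^ (k + 1) * δ + δ * M ^ (k + 1) := by gcongr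
      _ = (k + 1 : ℕ) * M ^ (k + 1) * δ := by push_cast; ring

lemma myPeriodic_bound (f : ℕ → ℝ) (N : ℕ) (hN : 1 ≤ N) (hf : ∀ n, f (n + N) = f n)
    (h0 : ∀ n, 0 ≤ f n) : ∃ M, 0 ≤ M ∧ ∀ n, f n ≤ M := by
  have hmod : ∀ q r, f (r + N * q) = f r := by
    intro q
    induction q with
    | zero => simp
    | succ q ih =>
      intro r
      have : r + N * (q + 1) = (r + N * q) + N := by ring
      rw [this, hf, ih]
  obtain ⟨M, hM⟩ := ((Finset.range N).image f).exists_le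
  have key : ∀ n, f n ≤ M := by
    intro n
    have h1 : f n = f (n % N) := by
      conv_lhs => rw [← Nat.mod_add_div n N]
      exact hmod (n / N) (n % N)
    rw [h1]
    exact hM _ (Finset.mem_image_of_mem f (Finset.mem_range.mpr (Nat.mod_lt n hN)))
  exact ⟨M, le_trans (h0 0) (key 0), key⟩

lemma myTransfer_sub_calB (a a' b T Q R : ℕ → H →L[ℂ] H) (z : ℂ) (n : ℕ) :
    transfer a a' b z n - calB T Q R z n =
      blk 0 0 (-(a' n ∘L adjoint (a (n - 1)) - R n))
        (z • (a' n - T n) - (a' n ∘L b n - Q n)) := by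
  unfold transfer calB
  rw [myBlk_sub]
  congr 1
  · exact sub_self _
  · exact sub_self _
  · abel
  · rw [comp_sub, comp_smul]
    simp only [ContinuousLinearMap.one_def, comp_id, smul_sub]
    abel

lemma myCalB_cont (T Q R : ℕ → H →L[ℂ] H) (i : ℕ) :
    Continuous fun z : ℂ => calB T Q R z i := by
  have : (fun z : ℂ => calB T Q R z i) =
      fun z => blk 0 1 (-(R i)) (-(Q i)) + z • blk 0 0 0 (T i) := by
    funext z
    rw [← myBlk_smulD, myBlk_add]
    unfold calB
    congr 1 <;> abel
  rw [this]
  exact continuous_const.add (continuous_id.smul continuous_const)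

lemma myTransfer_cont (a a' b : ℕ → H →L[ℂ] H) (n : ℕ) :
    Continuous fun z : ℂ => transfer a a' b z n := by
  have : (fun z : ℂ => transfer a a' b z n) =
      fun z => blk 0 1 (-(a' n ∘L adjoint (a (n - 1)))) (-(a' n ∘L b n)) +
        z • blk 0 0 0 (a' n) := by
    funext z
    rw [← myBlk_smulD, myBlk_add]
    unfold transfer
    congr 1
    · abel
    · abel
    · abel
    · rw [comp_sub, comp_smul]
      simp only [ContinuousLinearMap.one_def, comp_id, smul_sub]
      abel
  rw [this]
  exact continuous_const.add (continuous_id.smul continuous_const)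

lemma myProdD_cont (B : ℂ → ℕ → (H2 H →L[ℂ] H2 H)) (h : ∀ m, Continuous fun z => B z m)
    (n k : ℕ) : Continuous fun z => prodD (B z) n k := by
  induction k with
  | zero => exact continuous_const
  | succ k ih => exact (h (n + k)).clm_comp ih

lemma myNorm_adjoint (A : H →L[ℂ] H) : ‖adjoint A‖ = ‖A‖ :=
  LinearIsometryEquiv.norm_map adjoint A

lemma myTendsto_norm (f : ℕ → ℝ) (hf : Filter.Tendsto f Filter.atTop (nhds 0))
    (h0 : ∀ n, 0 ≤ f n) (ε : ℝ) (hε : 0 < ε) : ∃ M, ∀ m, M ≤ m → f m < ε := by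
  obtain ⟨M, hM⟩ := Metric.tendsto_atTop.mp hf ε hε
  exact ⟨M, fun m hm => by
    have := hM m hm
    rwa [Real.dist_eq, sub_zero, abs_of_nonneg (h0 m)] at this⟩


/-- Proposition `prop:5`. -/
theorem statement18 (a b a' : ℕ → H →L[ℂ] H)
    (hinv : ∀ n, Inverts (a n) (a' n)) (hb : ∀ n, IsSelfAdjoint (b n))
    (N : ℕ) (hN : 1 ≤ N)
    (T Q R C : ℕ → H →L[ℂ] H)
    (hTper : ∀ n, T (n + N) = T n) (hQper : ∀ n, Q (n + N) = Q n)
    (hRper : ∀ n, R (n + N) = R n) (hCper : ∀ n, C (n + N) = C n)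
    (hRinv : ∀ n, ∃ R', Inverts (R n) R') (hCinv : ∀ n, ∃ C', Inverts (C n) C')
    (hT : Tendsto (fun n => ‖a' n - T n‖) atTop (nhds 0))
    (hQ : Tendsto (fun n => ‖a' n ∘L b n - Q n‖) atTop (nhds 0))
    (hR : Tendsto (fun n => ‖a' n ∘L adjoint (a (n - 1)) - R n‖) atTop (nhds 0))
    (hC : Tendsto (fun n => ‖(‖a n‖⁻¹ : ℝ) • a n - C n‖) atTop (nhds 0)) :
    (∀ K : Set ℂ, IsCompact K → ∃ Cb : ℝ, ∀ n : ℕ, 1 ≤ n → ∀ z ∈ K,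
      ‖prodD (transfer a a' b z) n N‖ ≤ Cb) ∧
    (∀ K : Set ℂ, IsCompact K → ∀ ε > (0 : ℝ), ∀ᶠ n : ℕ in atTop, ∀ z ∈ K,
      ‖blk ((‖a (n + N - 1)‖⁻¹ : ℝ) • a (n + N - 1)) 0 0
            ((‖a (n + N - 1)‖⁻¹ : ℝ) • adjoint (a (n + N - 1))) ∘L
          blk 0 (-1) 1 0 ∘L prodD (transfer a a' b z) n N -
        blk (C (n + N - 1)) 0 0 (adjoint (C (n + N - 1))) ∘L
          blk 0 (-1) 1 0 ∘L prodD (calB T Q R z) n N‖ < ε) := by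
  obtain ⟨MT, hMT0, hMT⟩ := myPeriodic_bound (fun n => ‖T n‖) N hN
    (fun n => by simp [hTper]) (fun n => norm_nonneg _)
  obtain ⟨MQ, hMQ0, hMQ⟩ := myPeriodic_bound (fun n => ‖Q n‖) N hN
    (fun n => by simp [hQper]) (fun n => norm_nonneg _)
  obtain ⟨MR, hMR0, hMR⟩ := myPeriodic_bound (fun n => ‖R n‖) N hN
    (fun n => by simp [hRper]) (fun n => norm_nonneg _)
  obtain ⟨MC, hMC0, hMC⟩ := myPeriodic_bound (fun n => ‖C n‖) N hN
    (fun n => by simp [hCper]) (fun n => norm_nonneg _)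
  have h1norm : ‖(1 : H →L[ℂ] H)‖ ≤ 1 := by
    refine opNorm_le_bound _ zero_le_one fun x => ?_
    rw [ContinuousLinearMap.one_apply, one_mul]
  have h0norm : ‖(0 : H →L[ℂ] H)‖ = 0 := norm_zero
  have hcalB : ∀ (z : ℂ) (i : ℕ), ‖calB T Q R z i‖ ≤ 2 * (1 + MR + (‖z‖ * MT + MQ)) := by
    intro z i
    refine (myNorm_blk_le _ _ _ _).trans ?_
    have h3 : ‖-(R i)‖ ≤ MR := by rw [norm_neg]; exact hMR i
    have h4 : ‖z • T i - Q i‖ ≤ ‖z‖ * MT + MQ := by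
      refine (norm_sub_le _ _).trans (add_le_add ?_ (hMQ i))
      rw [norm_smul]
      exact mul_le_mul_of_nonneg_left (hMT i) (norm_nonneg z)
    linarith
  have hdiff : ∀ r : ℝ, 0 ≤ r → ∀ ε : ℝ, 0 < ε → ∃ M₀ : ℕ, ∀ m, M₀ ≤ m → ∀ z : ℂ, ‖z‖ ≤ r →
      ‖transfer a a' b z m - calB T Q R z m‖ ≤ ε := by
    intro r hr ε hε
    have hεT : (0:ℝ) < ε / (8 * (r + 1)) := by positivity
    have hε8 : (0:ℝ) < ε / 8 := by positivity
    obtain ⟨M1, hM1⟩ := myTendsto_norm _ hT (fun n => norm_nonneg _) _ hεT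
    obtain ⟨M2, hM2⟩ := myTendsto_norm _ hQ (fun n => norm_nonneg _) _ hε8
    obtain ⟨M3, hM3⟩ := myTendsto_norm _ hR (fun n => norm_nonneg _) _ hε8
    refine ⟨max M1 (max M2 M3), fun m hm z hz => ?_⟩
    have h1 := hM1 m (le_trans (le_max_left _ _) hm)
    have h2 := hM2 m (le_trans (le_trans (le_max_left _ _) (le_max_right _ _)) hm)
    have h3 := hM3 m (le_trans (le_trans (le_max_right _ _) (le_max_right _ _)) hm)
    rw [myTransfer_sub_calB]
    refine (myNorm_blk_le _ _ _ _).trans ?_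
    have h4 : ‖-(a' m ∘L adjoint (a (m - 1)) - R m)‖ ≤ ε / 8 := by
      rw [norm_neg]; linarith
    have h5 : ‖z • (a' m - T m) - (a' m ∘L b m - Q m)‖ ≤ r * (ε / (8 * (r + 1))) + ε / 8 := by
      refine (norm_sub_le _ _).trans (add_le_add ?_ (le_of_lt h2))
      rw [norm_smul]
      exact mul_le_mul hz (le_of_lt h1) (norm_nonneg _) hr
    have h6 : r * (ε / (8 * (r + 1))) ≤ ε / 8 := by
      rw [← mul_div_assoc, div_le_div_iff₀ (by linarith) (by norm_num : (0:ℝ) < 8)]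
      nlinarith [mul_nonneg hr (le_of_lt hε)]
    linarith
  have partI : ∀ K : Set ℂ, IsCompact K → ∃ Cb : ℝ, 0 ≤ Cb ∧
      ∀ n : ℕ, ∀ z ∈ K, ‖prodD (transfer a a' b z) n N‖ ≤ Cb := by
    intro K hK
    obtain ⟨r, hrK⟩ := hK.isBounded.exists_norm_le
    set r' := max r 0 with hr'
    have hr0 : (0:ℝ) ≤ r' := le_max_right _ _
    have hzK : ∀ z ∈ K, ‖z‖ ≤ r' := fun z hz => le_trans (hrK z hz) (le_max_left _ _)
    set MK := 2 * (1 + MR + (r' * MT + MQ)) with hMKdef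
    have hMK1 : 1 ≤ MK := by nlinarith [mul_nonneg hr0 hMT0]
    have hcbK : ∀ z ∈ K, ∀ i, ‖calB T Q R z i‖ ≤ MK := by
      intro z hz i
      refine (hcalB z i).trans ?_
      have : ‖z‖ * MT ≤ r' * MT := mul_le_mul_of_nonneg_right (hzK z hz) hMT0
      rw [hMKdef]; linarith
    obtain ⟨M₀, hM₀⟩ := hdiff r' hr0 1 one_pos
    have hbig : ∀ n, M₀ ≤ n → ∀ z ∈ K, ‖prodD (transfer a a' b z) n N‖ ≤ (MK + 1) ^ N := by
      intro n hn z hz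
      refine myProdD_norm_le _ _ _ _ (by linarith) fun j => ?_
      have hd1 : ‖transfer a a' b z (n + j) - calB T Q R z (n + j)‖ ≤ 1 :=
        hM₀ (n + j) (le_trans hn (Nat.le_add_right _ _)) z (hzK z hz)
      have hcb := hcbK z hz (n + j)
      calc ‖transfer a a' b z (n + j)‖
          = ‖(transfer a a' b z (n + j) - calB T Q R z (n + j)) + calB T Q R z (n + j)‖ := by
            rw [sub_add_cancel]
        _ ≤ ‖transfer a a' b z (n + j) - calB T Q R z (n + j)‖ + ‖calB T Q R z (n + j)‖ :=
            norm_add_le _ _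
        _ ≤ MK + 1 := by linarith
    have hsmall : ∀ n : ℕ, ∃ c : ℝ, ∀ z ∈ K, ‖prodD (transfer a a' b z) n N‖ ≤ c := fun n =>
      hK.exists_bound_of_continuousOn
        (Continuous.continuousOn (myProdD_cont _ (myTransfer_cont a a' b) n N))
    choose c hc using hsmall
    obtain ⟨c0, hc0⟩ := ((Finset.range M₀).image c).exists_le
    refine ⟨max (max c0 ((MK + 1) ^ N)) 0, le_max_right _ _, fun n z hz => ?_⟩
    rcases lt_or_ge n M₀ with h | h
    · exact le_trans (hc n z hz) (le_trans (le_trans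
        (hc0 _ (Finset.mem_image_of_mem c (Finset.mem_range.mpr h))) (le_max_left _ _))
        (le_max_left _ _))
    · exact le_trans (hbig n h z hz) (le_trans (le_max_right _ _) (le_max_left _ _))
  refine ⟨fun K hK => ?_, fun K hK ε hε => ?_⟩
  · obtain ⟨Cb, _, hCb⟩ := partI K hK
    exact ⟨Cb, fun n _ z hz => hCb n z hz⟩
  · obtain ⟨Cb, hCb0, hCb⟩ := partI K hK
    obtain ⟨r, hrK⟩ := hK.isBounded.exists_norm_le
    set r' := max r 0 with hr'
    have hr0 : (0:ℝ) ≤ r' := le_max_right _ _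
    have hzK : ∀ z ∈ K, ‖z‖ ≤ r' := fun z hz => le_trans (hrK z hz) (le_max_left _ _)
    set MK := 2 * (1 + MR + (r' * MT + MQ)) with hMKdef
    have hMK1 : 1 ≤ MK := by nlinarith [mul_nonneg hr0 hMT0]
    have hcbK : ∀ z ∈ K, ∀ i, ‖calB T Q R z i‖ ≤ MK := by
      intro z hz i
      refine (hcalB z i).trans ?_
      have : ‖z‖ * MT ≤ r' * MT := mul_le_mul_of_nonneg_right (hzK z hz) hMT0
      rw [hMKdef]; linarith
    have hMKN : (0:ℝ) ≤ (MK + 1) ^ N := pow_nonneg (by linarith) N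
    set P := (N : ℝ) * (MK + 1) ^ N with hPdef
    have hP0 : 0 ≤ P := mul_nonneg (Nat.cast_nonneg N) hMKN
    set A1 := 16 * Cb + 1 with hA1
    set A2 := 16 * (MC + 1) * P + 1 with hA2
    have hA1pos : (0:ℝ) < A1 := by rw [hA1]; linarith
    have hA2pos : (0:ℝ) < A2 := by
      rw [hA2]
      nlinarith [mul_nonneg (by linarith : (0:ℝ) ≤ 16 * (MC + 1)) hP0]
    set ε₁ := ε / (4 * A1) with hε₁
    set δ₀ := min 1 (ε / (4 * A2)) with hδ₀
    have hε₁pos : 0 < ε₁ := div_pos hε (by linarith)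
    have hδ₀pos : 0 < δ₀ := lt_min one_pos (div_pos hε (by linarith))
    have hδ₀le1 : δ₀ ≤ 1 := min_le_left _ _
    have hδ₀le : δ₀ ≤ ε / (4 * A2) := min_le_right _ _
    obtain ⟨M₁, hM₁⟩ := myTendsto_norm _ hC (fun n => norm_nonneg _) _ hε₁pos
    obtain ⟨M₂, hM₂⟩ := hdiff r' hr0 δ₀ hδ₀pos
    rw [eventually_atTop]
    refine ⟨max M₁ M₂, fun n hn z hz => ?_⟩
    set i := n + N - 1 with hi
    have hin : n ≤ i := by omega
    have hdC : ‖(‖a i‖⁻¹ : ℝ) • a i - C i‖ < ε₁ :=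
      hM₁ i (le_trans (le_trans (le_max_left _ _) hn) hin)
    set F := blk ((‖a i‖⁻¹ : ℝ) • a i) 0 0 ((‖a i‖⁻¹ : ℝ) • adjoint (a i)) with hF
    set G := blk (C i) 0 0 (adjoint (C i)) with hG
    set Eb : H2 H →L[ℂ] H2 H := blk 0 (-1) 1 0 with hE
    set X := prodD (transfer a a' b z) n N with hX
    set Y := prodD (calB T Q R z) n N with hY
    have hFG : F - G = blk ((‖a i‖⁻¹ : ℝ) • a i - C i) 0 0
        (adjoint ((‖a i‖⁻¹ : ℝ) • a i - C i)) := by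
      rw [hF, hG, myBlk_sub, myAdjoint_sub, myAdjoint_real_smul]
      simp only [sub_zero]
    have hnormFG : ‖F - G‖ ≤ 4 * ‖(‖a i‖⁻¹ : ℝ) • a i - C i‖ := by
      rw [hFG]
      refine (myNorm_blk_le _ _ _ _).trans ?_
      rw [myNorm_adjoint]
      simp only [norm_zero]
      linarith
    have hnormG : ‖G‖ ≤ 4 * (MC + 1) := by
      rw [hG]
      refine (myNorm_blk_le _ _ _ _).trans ?_
      rw [myNorm_adjoint]
      simp only [norm_zero]
      have := hMC i
      linarith
    have hnormE : ‖Eb‖ ≤ 4 := by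
      rw [hE]
      refine (myNorm_blk_le _ _ _ _).trans ?_
      rw [norm_neg]
      simp only [norm_zero]
      linarith
    have hXb : ‖X‖ ≤ Cb := hCb n z hz
    have hfac : ∀ j, ‖transfer a a' b z (n + j)‖ ≤ MK + 1 ∧
        ‖calB T Q R z (n + j)‖ ≤ MK + 1 ∧
        ‖transfer a a' b z (n + j) - calB T Q R z (n + j)‖ ≤ δ₀ := by
      intro j
      have hd1 : ‖transfer a a' b z (n + j) - calB T Q R z (n + j)‖ ≤ δ₀ :=
        hM₂ (n + j) (le_trans (le_trans (le_max_right _ _) hn) (Nat.le_add_right _ _)) z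
          (hzK z hz)
      have hcb := hcbK z hz (n + j)
      refine ⟨?_, by linarith, hd1⟩
      calc ‖transfer a a' b z (n + j)‖
          = ‖(transfer a a' b z (n + j) - calB T Q R z (n + j)) + calB T Q R z (n + j)‖ := by
            rw [sub_add_cancel]
        _ ≤ ‖transfer a a' b z (n + j) - calB T Q R z (n + j)‖ + ‖calB T Q R z (n + j)‖ :=
            norm_add_le _ _
        _ ≤ MK + 1 := by linarith
    have hXY : ‖X - Y‖ ≤ P * δ₀ := by
      have h := myProdD_sub_le (transfer a a' b z) (calB T Q R z) n N (MK + 1) δ₀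
        (by linarith) (le_of_lt hδ₀pos) (fun j => (hfac j).1) (fun j => (hfac j).2.1)
        (fun j => (hfac j).2.2)
      rw [hPdef]
      exact h
    have hdec : F ∘L Eb ∘L X - G ∘L Eb ∘L Y =
        (F - G) ∘L (Eb ∘L X) + G ∘L (Eb ∘L (X - Y)) := by
      rw [sub_comp, comp_sub, comp_sub]
      abel
    have hd0 : (0:ℝ) ≤ ‖(‖a i‖⁻¹ : ℝ) • a i - C i‖ := norm_nonneg _
    have t1 : (4 * ‖(‖a i‖⁻¹ : ℝ) • a i - C i‖) * (4 * Cb) ≤ ε / 4 := by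
      have e1 : (4 * ‖(‖a i‖⁻¹ : ℝ) • a i - C i‖) * (4 * Cb)
          = 16 * Cb * ‖(‖a i‖⁻¹ : ℝ) • a i - C i‖ := by ring
      have e2 : 16 * Cb * ‖(‖a i‖⁻¹ : ℝ) • a i - C i‖ ≤ 16 * Cb * ε₁ :=
        mul_le_mul_of_nonneg_left (le_of_lt hdC) (by linarith)
      have e3 : 16 * Cb * ε₁ ≤ A1 * ε₁ :=
        mul_le_mul_of_nonneg_right (by rw [hA1]; linarith) (le_of_lt hε₁pos)
      have e4 : A1 * ε₁ = ε / 4 := by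
        rw [hε₁]
        field_simp
      linarith
    have t2 : (4 * (MC + 1)) * (4 * (P * δ₀)) ≤ ε / 4 := by
      have e1 : (4 * (MC + 1)) * (4 * (P * δ₀)) = (16 * (MC + 1) * P) * δ₀ := by ring
      have e2 : (16 * (MC + 1) * P) * δ₀ ≤ A2 * δ₀ :=
        mul_le_mul_of_nonneg_right (by rw [hA2]; linarith) (le_of_lt hδ₀pos)
      have e3 : A2 * δ₀ ≤ A2 * (ε / (4 * A2)) :=
        mul_le_mul_of_nonneg_left hδ₀le (by linarith)
      have e4 : A2 * (ε / (4 * A2)) = ε / 4 := by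
        field_simp
      linarith
    calc ‖F ∘L Eb ∘L X - G ∘L Eb ∘L Y‖
        ≤ ‖(F - G) ∘L (Eb ∘L X)‖ + ‖G ∘L (Eb ∘L (X - Y))‖ := by
          rw [hdec]; exact norm_add_le _ _
      _ ≤ ‖F - G‖ * (‖Eb‖ * ‖X‖) + ‖G‖ * (‖Eb‖ * ‖X - Y‖) := by
          refine add_le_add ((opNorm_comp_le _ _).trans ?_) ((opNorm_comp_le _ _).trans ?_) <;>
            exact mul_le_mul_of_nonneg_left (opNorm_comp_le _ _) (norm_nonneg _)
      _ ≤ (4 * ‖(‖a i‖⁻¹ : ℝ) • a i - C i‖) * (4 * Cb) + (4 * (MC + 1)) * (4 * (P * δ₀)) := by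
          refine add_le_add
            (mul_le_mul hnormFG ?_ (by positivity) (by linarith))
            (mul_le_mul hnormG ?_ (by positivity) (by linarith))
          · exact mul_le_mul hnormE hXb (norm_nonneg _) (by norm_num)
          · exact mul_le_mul hnormE hXY (norm_nonneg _) (by norm_num)
      _ ≤ ε / 4 + ε / 4 := add_le_add t1 t2
      _ < ε := by linarith
end
end
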